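/- Let Λ be a countable index set and {y_λ}_{λ∈Λ} a family of points in ℝⁿ such that for the closed unit ball K there is a constant C_K > 0 with sup_{x∈ℝⁿ} |{λ ∈ Λ : x ∈ y_λ + K}| ≤ C_K. Then for every ε > 0, sup_{μ∈Λ} Σ_{λ∈Λ} (1 + |y_λ − y_μ|)^{−n−ε} is finite; in fact it is bounded by 2^{n+ε} C_K ‖(1+|·|)^{−n−ε}‖_{L¹(ℝⁿ)} / |K|. -/

import Mathlib

open MeasureTheory

/-- If the translates `y l + K` of the closed unit ball `K` have overlap bounded
by `C_K`, then the sums `∑_λ (1 + |y_λ − y_μ|)^{−n−ε}` are uniformly bounded by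
`2^{n+ε} C_K ‖(1+|·|)^{−n−ε}‖_{L¹} / |K|`. -/
theorem stmt_0 (n : ℕ) (Λ : Type*) [Countable Λ]
    (y : Λ → EuclideanSpace ℝ (Fin n)) (ε CK : ℝ) (hε : 0 < ε) (hCK : 0 < CK)
    (hover : ∀ x : EuclideanSpace ℝ (Fin n),
      ∃ hfin : {l : Λ |
        x - y l ∈ Metric.closedBall (0 : EuclideanSpace ℝ (Fin n)) 1}.Finite,
        (hfin.toFinset.card : ℝ) ≤ CK) :
    ∀ μ : Λ,
      Summable (fun l : Λ => (1 + dist (y l) (y μ)) ^ (-((n : ℝ) + ε))) ∧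
      ∑' l : Λ, (1 + dist (y l) (y μ)) ^ (-((n : ℝ) + ε)) ≤
        2 ^ ((n : ℝ) + ε) * CK *
          (∫ x : EuclideanSpace ℝ (Fin n), (1 + ‖x‖) ^ (-((n : ℝ) + ε))) /
          (volume (Metric.closedBall (0 : EuclideanSpace ℝ (Fin n)) 1)).toReal := by
  intro μ
  classical
  set r : ℝ := (n : ℝ) + ε with hr_def
  have hr0 : 0 < r := by positivity
  -- the integrand and its integrability
  set f : EuclideanSpace ℝ (Fin n) → ℝ := fun x => (1 + ‖x - y μ‖) ^ (-r) with hf_def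
  have hfnonneg : ∀ x, 0 ≤ f x := fun x => by
    apply Real.rpow_nonneg; positivity
  have hint0 : Integrable (fun x : EuclideanSpace ℝ (Fin n) => (1 + ‖x‖) ^ (-r)) := by
    apply integrable_one_add_norm
    rw [finrank_euclideanSpace_fin]
    linarith
  have hintf : Integrable f := by
    have := hint0.comp_sub_right (y μ)
    exact this
  -- positivity and finiteness of the volume of the unit ball
  set V : ℝ := (volume (Metric.closedBall (0 : EuclideanSpace ℝ (Fin n)) 1)).toReal with hV_def
  have hVpos : 0 < V := by
    rw [hV_def]
    apply ENNReal.toReal_pos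
    · exact (Metric.measure_closedBall_pos volume 0 one_pos).ne'
    · exact (MeasureTheory.measure_closedBall_lt_top).ne
  -- per-ball lower bound for the integral of f
  have hball : ∀ l : Λ, (1 + dist (y l) (y μ)) ^ (-r) ≤
      2 ^ r / V * ∫ x in Metric.closedBall (y l) 1, f x := by
    intro l
    have hc : ∀ x ∈ Metric.closedBall (y l) 1,
        2 ^ (-r) * (1 + dist (y l) (y μ)) ^ (-r) ≤ f x := by
      intro x hx
      rw [Metric.mem_closedBall] at hx
      have h1 : (0:ℝ) < 1 + ‖x - y μ‖ := by positivity
      have h2 : 1 + ‖x - y μ‖ ≤ 2 * (1 + dist (y l) (y μ)) := by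
        have : ‖x - y μ‖ = dist x (y μ) := (dist_eq_norm _ _).symm
        rw [this]
        have := dist_triangle x (y l) (y μ)
        have hxl : dist x (y l) ≤ 1 := hx
        nlinarith [dist_nonneg (x := y l) (y := y μ)]
      have := Real.rpow_le_rpow_of_nonpos h1 h2 (neg_nonpos.mpr hr0.le)
      calc 2 ^ (-r) * (1 + dist (y l) (y μ)) ^ (-r)
          = (2 * (1 + dist (y l) (y μ))) ^ (-r) := by
            rw [Real.mul_rpow (by norm_num) (by positivity)]
        _ ≤ (1 + ‖x - y μ‖) ^ (-r) := this
    have hmeas : MeasurableSet (Metric.closedBall (y l) 1) :=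
      Metric.isClosed_closedBall.measurableSet
    have hvol : volume (Metric.closedBall (y l) 1) ≠ ⊤ :=
      MeasureTheory.measure_closedBall_lt_top.ne
    have key := setIntegral_ge_of_const_le hmeas hvol hc hintf.integrableOn
    have hVl : (volume (Metric.closedBall (y l) 1)).toReal = V := by
      rw [hV_def, Measure.addHaar_closedBall_center]
    rw [show volume.real (Metric.closedBall (y l) 1) = V from hVl] at key
    have h2r : (0:ℝ) < 2 ^ r := by positivity
    rw [div_mul_eq_mul_div, le_div_iff₀ hVpos]
    calc (1 + dist (y l) (y μ)) ^ (-r) * V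
        = 2 ^ r * (2 ^ (-r) * (1 + dist (y l) (y μ)) ^ (-r) * V) := by
          rw [← mul_assoc, ← mul_assoc, ← Real.rpow_add (by norm_num : (0:ℝ) < 2)]
          simp
      _ ≤ 2 ^ r * ∫ x in Metric.closedBall (y l) 1, f x := by
          apply mul_le_mul_of_nonneg_left _ h2r.le
          rw [smul_eq_mul] at key
          linarith [key]
  -- finite sums of ball integrals are bounded by CK * ∫ f
  have hsum : ∀ S : Finset Λ,
      ∑ l ∈ S, (∫ x in Metric.closedBall (y l) 1, f x) ≤ CK * ∫ x, f x := by
    intro S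
    have hind : ∀ l : Λ, Integrable
        ((Metric.closedBall (y l) 1).indicator f) :=
      fun l => hintf.indicator Metric.isClosed_closedBall.measurableSet
    have h1 : ∑ l ∈ S, (∫ x in Metric.closedBall (y l) 1, f x)
        = ∫ x, ∑ l ∈ S, (Metric.closedBall (y l) 1).indicator f x := by
      rw [integral_finset_sum S (fun l _ => hind l)]
      refine Finset.sum_congr rfl fun l _ => ?_
      rw [integral_indicator Metric.isClosed_closedBall.measurableSet]
    rw [h1]
    have h2 : ∀ x, ∑ l ∈ S, (Metric.closedBall (y l) 1).indicator f x ≤ CK * f x := by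
      intro x
      obtain ⟨hfin, hcard⟩ := hover x
      have hsub : S.filter (fun l => x ∈ Metric.closedBall (y l) 1) ⊆ hfin.toFinset := by
        intro l hl
        rw [Finset.mem_filter] at hl
        rw [Set.Finite.mem_toFinset]
        simp only [Set.mem_setOf_eq, Metric.mem_closedBall, dist_zero_right]
        rw [← dist_eq_norm]
        exact Metric.mem_closedBall.mp hl.2
      calc ∑ l ∈ S, (Metric.closedBall (y l) 1).indicator f x
          = ∑ l ∈ S.filter (fun l => x ∈ Metric.closedBall (y l) 1), f x := by
            rw [Finset.sum_filter]
            refine Finset.sum_congr rfl fun l _ => ?_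
            by_cases h : x ∈ Metric.closedBall (y l) 1 <;>
              simp [Set.indicator, h]
        _ = (S.filter (fun l => x ∈ Metric.closedBall (y l) 1)).card * f x := by
            rw [Finset.sum_const, nsmul_eq_mul]
        _ ≤ CK * f x := by
            apply mul_le_mul_of_nonneg_right _ (hfnonneg x)
            calc ((S.filter (fun l => x ∈ Metric.closedBall (y l) 1)).card : ℝ)
                ≤ (hfin.toFinset.card : ℝ) := by
                  exact_mod_cast Finset.card_le_card hsub
              _ ≤ CK := hcard
    have hintsum : Integrable (fun x => ∑ l ∈ S, (Metric.closedBall (y l) 1).indicator f x) :=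
      integrable_finset_sum S (fun l _ => hind l)
    calc ∫ x, ∑ l ∈ S, (Metric.closedBall (y l) 1).indicator f x
        ≤ ∫ x, CK * f x := integral_mono hintsum (hintf.const_mul CK) h2
      _ = CK * ∫ x, f x := integral_const_mul CK f
  -- translation invariance
  have htrans : ∫ x, f x = ∫ x : EuclideanSpace ℝ (Fin n), (1 + ‖x‖) ^ (-r) := by
    rw [hf_def]
    exact integral_sub_right_eq_self (fun x : EuclideanSpace ℝ (Fin n) => (1 + ‖x‖) ^ (-r)) (y μ)
  -- combine: uniform bound on finite partial sums
  set B : ℝ := 2 ^ r * CK * (∫ x : EuclideanSpace ℝ (Fin n), (1 + ‖x‖) ^ (-r)) / V with hB_def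
  have hpartial : ∀ S : Finset Λ, ∑ l ∈ S, (1 + dist (y l) (y μ)) ^ (-r) ≤ B := by
    intro S
    calc ∑ l ∈ S, (1 + dist (y l) (y μ)) ^ (-r)
        ≤ ∑ l ∈ S, 2 ^ r / V * ∫ x in Metric.closedBall (y l) 1, f x :=
          Finset.sum_le_sum fun l _ => hball l
      _ = 2 ^ r / V * ∑ l ∈ S, (∫ x in Metric.closedBall (y l) 1, f x) := by
          rw [Finset.mul_sum]
      _ ≤ 2 ^ r / V * (CK * ∫ x, f x) := by
          apply mul_le_mul_of_nonneg_left (hsum S)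
          positivity
      _ = B := by rw [hB_def, htrans]; ring
  have hnonneg : ∀ l : Λ, 0 ≤ (1 + dist (y l) (y μ)) ^ (-r) := fun l => by
    apply Real.rpow_nonneg; positivity
  have hsummable : Summable (fun l : Λ => (1 + dist (y l) (y μ)) ^ (-r)) :=
    summable_of_sum_le hnonneg hpartial
  exact ⟨hsummable, Summable.tsum_le_of_sum_le hsummable hpartial⟩
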